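/- Let V be a finite set of points in the Euclidean plane ℝ², and let {p,q} and {r,s} be double-normal pairs of V such that the closed segments [p,q] and [r,s] are disjoint. Then p, q, r, s form a rectangle with pq and rs as opposite sides: either q − p = s − r and ⟨q − p, r − p⟩ = 0, or q − p = r − s and ⟨q − p, s − p⟩ = 0. -/

import Mathlib

private lemma slab (U W k g m : ℝ) (hU : 0 < U) (hW : 0 < W)
    (h1 : 0 ≤ g) (h2 : g ≤ U) (h3 : 0 ≤ g + k) (h4 : g + k ≤ U)
    (h5 : m ≤ 0) (h6 : -W ≤ m) (h7 : 0 ≤ k - m) (h8 : k - m ≤ W) :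
    0 ≤ g*W - m*k ∧ g*W - m*k ≤ U*W - k^2 ∧ 0 ≤ g*k - m*U ∧ g*k - m*U ≤ U*W - k^2 := by
  rcases le_or_gt k 0 with hk | hk
  · refine ⟨?_, ?_, ?_, ?_⟩
    · nlinarith [mul_nonneg hW.le h3, mul_nonneg (neg_nonneg.mpr hk) (by linarith : (0:ℝ) ≤ W + m)]
    · nlinarith [mul_nonneg hW.le (by linarith : (0:ℝ) ≤ U - g), mul_nonneg (neg_nonneg.mpr hk) h7]
    · nlinarith [mul_nonneg (neg_nonneg.mpr hk) (by linarith : (0:ℝ) ≤ U - g), mul_nonneg hU.le h7]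
    · nlinarith [mul_nonneg (neg_nonneg.mpr hk) h3, mul_nonneg hU.le (by linarith : (0:ℝ) ≤ W + m)]
  · refine ⟨?_, ?_, ?_, ?_⟩
    · nlinarith [mul_nonneg h1 hW.le, mul_nonneg (neg_nonneg.mpr h5) hk.le]
    · nlinarith [mul_nonneg hW.le (by linarith : (0:ℝ) ≤ U - g - k), mul_nonneg hk.le (by linarith : (0:ℝ) ≤ W - k + m)]
    · nlinarith [mul_nonneg h1 hk.le, mul_nonneg (neg_nonneg.mpr h5) hU.le]
    · nlinarith [mul_nonneg hU.le (by linarith : (0:ℝ) ≤ W + m - k), mul_nonneg hk.le (by linarith : (0:ℝ) ≤ U - g - k)]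

private lemma par (U W k g m : ℝ) (hU : 0 < U) (hW : 0 < W)
    (h1 : 0 ≤ g) (h2 : g ≤ U) (h3 : 0 ≤ g + k) (h4 : g + k ≤ U)
    (h5 : m ≤ 0) (h6 : -W ≤ m) (h7 : 0 ≤ k - m) (h8 : k - m ≤ W)
    (hUW : U*W = k^2) (hUm : U*m = k*g) :
    (g = 0 ∧ k = U) ∨ (g = U ∧ k = -U) := by
  rcases lt_trichotomy k 0 with hk | hk | hk
  · right
    have hgeq : g = U := by
      have : U ≤ g := by nlinarith [mul_nonneg hU.le h7]
      linarith
    have hmk : m = k := by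
      have : U * m = U * k := by rw [hUm, hgeq]; ring
      exact mul_left_cancel₀ hU.ne' this
    have hkU : k ≤ -U := by
      nlinarith [mul_nonneg hU.le (by linarith : (0:ℝ) ≤ W + k)]
    exact ⟨hgeq, by linarith [h3]⟩
  · exfalso; nlinarith
  · left
    have hgeq : g = 0 := by
      have : g ≤ 0 := by nlinarith [hUm, mul_nonpos_of_nonneg_of_nonpos hU.le h5]
      linarith
    have hmz : m = 0 := by
      have : U * m = U * 0 := by rw [hUm, hgeq]; ring
      exact mul_left_cancel₀ hU.ne' this
    have hkU : U ≤ k := by nlinarith [hmz, h8]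
    exact ⟨hgeq, by linarith [h4, hgeq]⟩

private lemma divhelp (NL NM D P Q R S : ℝ) (hD : D ≠ 0)
    (h : D*P + NL*(Q-P) = D*R + NM*(S-R)) :
    (1 - NL/D)*P + (NL/D)*Q = (1 - NM/D)*R + (NM/D)*S := by
  field_simp
  linarith [h]

set_option maxHeartbeats 1000000 in
private lemma key_scalar (p0 p1 q0 q1 r0 r1 s0 s1 : ℝ)
    (hu : q0 - p0 ≠ 0 ∨ q1 - p1 ≠ 0) (hw : s0 - r0 ≠ 0 ∨ s1 - r1 ≠ 0)
    (A1 : 0 ≤ (r0-p0)*(q0-p0)+(r1-p1)*(q1-p1))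
    (A2 : 0 ≤ (r0-q0)*(p0-q0)+(r1-q1)*(p1-q1))
    (A3 : 0 ≤ (s0-p0)*(q0-p0)+(s1-p1)*(q1-p1))
    (A4 : 0 ≤ (s0-q0)*(p0-q0)+(s1-q1)*(p1-q1))
    (B1 : 0 ≤ (p0-r0)*(s0-r0)+(p1-r1)*(s1-r1))
    (B2 : 0 ≤ (p0-s0)*(r0-s0)+(p1-s1)*(r1-s1))
    (B3 : 0 ≤ (q0-r0)*(s0-r0)+(q1-r1)*(s1-r1))
    (B4 : 0 ≤ (q0-s0)*(r0-s0)+(q1-s1)*(r1-s1)) :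
    (∃ l m : ℝ, 0 ≤ l ∧ l ≤ 1 ∧ 0 ≤ m ∧ m ≤ 1 ∧
       (1-l)*p0 + l*q0 = (1-m)*r0 + m*s0 ∧ (1-l)*p1 + l*q1 = (1-m)*r1 + m*s1) ∨
    ((q0-p0 = s0-r0 ∧ q1-p1 = s1-r1) ∧ (q0-p0)*(r0-p0)+(q1-p1)*(r1-p1) = 0) ∨
    ((q0-p0 = r0-s0 ∧ q1-p1 = r1-s1) ∧ (q0-p0)*(s0-p0)+(q1-p1)*(s1-p1) = 0) := by
  have hU : 0 < (q0-p0)^2+(q1-p1)^2 := by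
    rcases hu with h | h <;> nlinarith [mul_self_pos.mpr h, sq_nonneg (q0-p0), sq_nonneg (q1-p1)]
  have hW : 0 < (s0-r0)^2+(s1-r1)^2 := by
    rcases hw with h | h <;> nlinarith [mul_self_pos.mpr h, sq_nonneg (s0-r0), sq_nonneg (s1-r1)]
  have h1 : 0 ≤ (r0-p0)*(q0-p0)+(r1-p1)*(q1-p1) := A1
  have h2 : (r0-p0)*(q0-p0)+(r1-p1)*(q1-p1) ≤ (q0-p0)^2+(q1-p1)^2 := by linarith [A2]
  have h3 : 0 ≤ ((r0-p0)*(q0-p0)+(r1-p1)*(q1-p1)) + ((q0-p0)*(s0-r0)+(q1-p1)*(s1-r1)) := by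
    linarith [A3]
  have h4 : ((r0-p0)*(q0-p0)+(r1-p1)*(q1-p1)) + ((q0-p0)*(s0-r0)+(q1-p1)*(s1-r1))
      ≤ (q0-p0)^2+(q1-p1)^2 := by linarith [A4]
  have h5 : (r0-p0)*(s0-r0)+(r1-p1)*(s1-r1) ≤ 0 := by linarith [B1]
  have h6 : -((s0-r0)^2+(s1-r1)^2) ≤ (r0-p0)*(s0-r0)+(r1-p1)*(s1-r1) := by linarith [B2]
  have h7 : 0 ≤ ((q0-p0)*(s0-r0)+(q1-p1)*(s1-r1)) - ((r0-p0)*(s0-r0)+(r1-p1)*(s1-r1)) := by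
    linarith [B3]
  have h8 : ((q0-p0)*(s0-r0)+(q1-p1)*(s1-r1)) - ((r0-p0)*(s0-r0)+(r1-p1)*(s1-r1))
      ≤ (s0-r0)^2+(s1-r1)^2 := by linarith [B4]
  by_cases hD : (q0-p0)*(s1-r1) - (q1-p1)*(s0-r0) = 0
  · -- parallel case
    right
    have hw1' : ((q0-p0)^2+(q1-p1)^2)*(s0-r0)
        = ((q0-p0)*(s0-r0)+(q1-p1)*(s1-r1))*(q0-p0) := by
      linear_combination (-(q1-p1)) * hD
    have hw2' : ((q0-p0)^2+(q1-p1)^2)*(s1-r1)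
        = ((q0-p0)*(s0-r0)+(q1-p1)*(s1-r1))*(q1-p1) := by
      linear_combination (q0-p0) * hD
    have hUW : ((q0-p0)^2+(q1-p1)^2)*((s0-r0)^2+(s1-r1)^2)
        = ((q0-p0)*(s0-r0)+(q1-p1)*(s1-r1))^2 := by
      linear_combination ((q0-p0)*(s1-r1) - (q1-p1)*(s0-r0)) * hD
    have hUm : ((q0-p0)^2+(q1-p1)^2)*((r0-p0)*(s0-r0)+(r1-p1)*(s1-r1))
        = ((q0-p0)*(s0-r0)+(q1-p1)*(s1-r1))*((r0-p0)*(q0-p0)+(r1-p1)*(q1-p1)) := by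
      linear_combination (r0-p0)*hw1' + (r1-p1)*hw2'
    rcases par _ _ _ _ _ hU hW h1 h2 h3 h4 h5 h6 h7 h8 hUW hUm with ⟨hg, hk⟩ | ⟨hg, hk⟩
    · left
      have e0 : s0 - r0 = q0 - p0 := by
        have h := hw1'
        rw [hk] at h
        exact mul_left_cancel₀ hU.ne' h
      have e1 : s1 - r1 = q1 - p1 := by
        have h := hw2'
        rw [hk] at h
        exact mul_left_cancel₀ hU.ne' h
      exact ⟨⟨e0.symm, e1.symm⟩, by linear_combination hg⟩
    · right
      have e0 : s0 - r0 = -(q0 - p0) := by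
        have h := hw1'
        rw [hk] at h
        have h' : ((q0-p0)^2+(q1-p1)^2)*(s0-r0) = ((q0-p0)^2+(q1-p1)^2)*(-(q0-p0)) := by
          rw [h]; ring
        exact mul_left_cancel₀ hU.ne' h'
      have e1 : s1 - r1 = -(q1 - p1) := by
        have h := hw2'
        rw [hk] at h
        have h' : ((q0-p0)^2+(q1-p1)^2)*(s1-r1) = ((q0-p0)^2+(q1-p1)^2)*(-(q1-p1)) := by
          rw [h]; ring
        exact mul_left_cancel₀ hU.ne' h'
      refine ⟨⟨by linarith, by linarith⟩, ?_⟩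
      linear_combination hg + hk
  · -- non-parallel: segments intersect
    left
    obtain ⟨P1, P2, P3, P4⟩ := slab _ _ _ _ _ hU hW h1 h2 h3 h4 h5 h6 h7 h8
    have hD2 : 0 < ((q0-p0)*(s1-r1) - (q1-p1)*(s0-r0))^2 :=
      lt_of_le_of_ne (sq_nonneg _) (Ne.symm (pow_ne_zero 2 hD))
    have hNL0 : 0 ≤ ((r0-p0)*(s1-r1) - (r1-p1)*(s0-r0)) * ((q0-p0)*(s1-r1) - (q1-p1)*(s0-r0)) := by
      linarith [P1]
    have hNL1 : ((r0-p0)*(s1-r1) - (r1-p1)*(s0-r0)) * ((q0-p0)*(s1-r1) - (q1-p1)*(s0-r0))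
        ≤ ((q0-p0)*(s1-r1) - (q1-p1)*(s0-r0))^2 := by linarith [P2]
    have hNM0 : 0 ≤ ((r0-p0)*(q1-p1) - (r1-p1)*(q0-p0)) * ((q0-p0)*(s1-r1) - (q1-p1)*(s0-r0)) := by
      linarith [P3]
    have hNM1 : ((r0-p0)*(q1-p1) - (r1-p1)*(q0-p0)) * ((q0-p0)*(s1-r1) - (q1-p1)*(s0-r0))
        ≤ ((q0-p0)*(s1-r1) - (q1-p1)*(s0-r0))^2 := by linarith [P4]
    have hrwl : ((r0-p0)*(s1-r1) - (r1-p1)*(s0-r0)) / ((q0-p0)*(s1-r1) - (q1-p1)*(s0-r0))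
        = (((r0-p0)*(s1-r1) - (r1-p1)*(s0-r0)) * ((q0-p0)*(s1-r1) - (q1-p1)*(s0-r0)))
          / ((q0-p0)*(s1-r1) - (q1-p1)*(s0-r0))^2 := by
      rw [sq, mul_div_mul_right _ _ hD]
    have hrwm : ((r0-p0)*(q1-p1) - (r1-p1)*(q0-p0)) / ((q0-p0)*(s1-r1) - (q1-p1)*(s0-r0))
        = (((r0-p0)*(q1-p1) - (r1-p1)*(q0-p0)) * ((q0-p0)*(s1-r1) - (q1-p1)*(s0-r0)))
          / ((q0-p0)*(s1-r1) - (q1-p1)*(s0-r0))^2 := by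
      rw [sq, mul_div_mul_right _ _ hD]
    refine ⟨((r0-p0)*(s1-r1) - (r1-p1)*(s0-r0)) / ((q0-p0)*(s1-r1) - (q1-p1)*(s0-r0)),
            ((r0-p0)*(q1-p1) - (r1-p1)*(q0-p0)) / ((q0-p0)*(s1-r1) - (q1-p1)*(s0-r0)),
            ?_, ?_, ?_, ?_, ?_, ?_⟩
    · rw [hrwl]; exact div_nonneg hNL0 (sq_nonneg _)
    · rw [hrwl]; exact (div_le_one hD2).mpr hNL1
    · rw [hrwm]; exact div_nonneg hNM0 (sq_nonneg _)
    · rw [hrwm]; exact (div_le_one hD2).mpr hNM1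
    · exact divhelp _ _ _ _ _ _ _ hD (by ring)
    · exact divhelp _ _ _ _ _ _ _ hD (by ring)
open scoped RealInnerProductSpace Classical

noncomputable section

abbrev Euc (d : ℕ) : Type := EuclideanSpace ℝ (Fin d)

/-- `{p, q}` is a double-normal pair of the finite point set `V`. -/
def IsDNPair {d : ℕ} (V : Finset (Euc d)) (p q : Euc d) : Prop :=
  p ∈ V ∧ q ∈ V ∧ p ≠ q ∧
    ∀ v ∈ V, 0 ≤ ⟪v - p, q - p⟫ ∧ 0 ≤ ⟪v - q, p - q⟫

/-- `N(V)`: the number of (unordered) double-normal pairs of `V`. -/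
def numDN {d : ℕ} (V : Finset (Euc d)) : ℕ :=
  ((V ×ˢ V).filter fun pq => IsDNPair V pq.1 pq.2).card / 2

/-- `{p, q}` is a strict double-normal pair of `V`. -/
def IsStrictDNPair {d : ℕ} (V : Finset (Euc d)) (p q : Euc d) : Prop :=
  IsDNPair V p q ∧
    ∀ v ∈ V, v ≠ p → v ≠ q → 0 < ⟪v - p, q - p⟫ ∧ 0 < ⟪v - q, p - q⟫

/-- `N'(V)`: the number of (unordered) strict double-normal pairs of `V`. -/
def numStrictDN {d : ℕ} (V : Finset (Euc d)) : ℕ :=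
  ((V ×ˢ V).filter fun pq => IsStrictDNPair V pq.1 pq.2).card / 2

/-- Two disjoint double-normal pairs in the plane are opposite sides of a rectangle. -/
theorem doubleNormal_disjoint_rectangle (V : Finset (Euc 2)) (p q r s : Euc 2)
    (hpq : IsDNPair V p q) (hrs : IsDNPair V r s)
    (hdisj : Disjoint (segment ℝ p q) (segment ℝ r s)) :
    (q - p = s - r ∧ ⟪q - p, r - p⟫ = 0) ∨
      (q - p = r - s ∧ ⟪q - p, s - p⟫ = 0) := by
  obtain ⟨hpV, hqV, hpqne, hA⟩ := hpq
  obtain ⟨hrV, hsV, hrsne, hB⟩ := hrs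
  have hip : ∀ x y z t : Euc 2,
      ⟪x - y, z - t⟫ = (x 0 - y 0)*(z 0 - t 0) + (x 1 - y 1)*(z 1 - t 1) := by
    intro x y z t
    simp [PiLp.inner_apply, Fin.sum_univ_two, RCLike.inner_apply, PiLp.sub_apply]; ring
  have A1 := (hA r hrV).1
  have A2 := (hA r hrV).2
  have A3 := (hA s hsV).1
  have A4 := (hA s hsV).2
  have B1 := (hB p hpV).1
  have B2 := (hB p hpV).2
  have B3 := (hB q hqV).1
  have B4 := (hB q hqV).2
  rw [hip] at A1 A2 A3 A4 B1 B2 B3 B4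
  have hu : q 0 - p 0 ≠ 0 ∨ q 1 - p 1 ≠ 0 := by
    by_contra h
    push_neg at h
    refine hpqne (PiLp.ext fun i => ?_)
    fin_cases i
    · show p 0 = q 0; linarith [h.1]
    · show p 1 = q 1; linarith [h.2]
  have hw : s 0 - r 0 ≠ 0 ∨ s 1 - r 1 ≠ 0 := by
    by_contra h
    push_neg at h
    refine hrsne (PiLp.ext fun i => ?_)
    fin_cases i
    · show r 0 = s 0; linarith [h.1]
    · show r 1 = s 1; linarith [h.2]
  rcases key_scalar (p 0) (p 1) (q 0) (q 1) (r 0) (r 1) (s 0) (s 1) hu hw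
      A1 A2 A3 A4 B1 B2 B3 B4 with
    ⟨l, m, hl0, hl1, hm0, hm1, e0, e1⟩ | ⟨⟨c0, c1⟩, hz⟩ | ⟨⟨c0, c1⟩, hz⟩
  · exfalso
    have hmem1 : (1-l) • p + l • q ∈ segment ℝ p q :=
      ⟨1-l, l, by linarith, hl0, by ring, rfl⟩
    have heq : (1-m) • r + m • s = (1-l) • p + l • q := by
      refine PiLp.ext fun i => ?_
      fin_cases i
      · show (1-m) * r 0 + m * s 0 = (1-l) * p 0 + l * q 0
        linarith [e0]
      · show (1-m) * r 1 + m * s 1 = (1-l) * p 1 + l * q 1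
        linarith [e1]
    have hmem2 : (1-l) • p + l • q ∈ segment ℝ r s :=
      ⟨1-m, m, by linarith, hm0, by ring, heq⟩
    exact Set.disjoint_left.mp hdisj hmem1 hmem2
  · left
    refine ⟨PiLp.ext fun i => ?_, ?_⟩
    · fin_cases i
      · exact c0
      · exact c1
    · rw [hip]; exact hz
  · right
    refine ⟨PiLp.ext fun i => ?_, ?_⟩
    · fin_cases i
      · exact c0
      · exact c1
    · rw [hip]; exact hz
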